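/- Let α > 2 be a natural number. Then the derivative M'(ω) of the one-dimensional solitary wave mass vanishes at exactly one point ω_c ∈ (0, ω*), M' is negative on (0, ω_c) and positive on (ω_c, ω*). -/

import Mathlib

open Real MeasureTheory Set


noncomputable def Jf (q p c : ℝ) : ℝ :=
  ∫ z in Set.Ioi (0:ℝ), (1 + z^2) ^ (-q) * (c + z^2) ^ (-p)

lemma cont_integrand {q p c : ℝ} (hc : 0 < c) :
    Continuous fun z : ℝ => (1 + z^2) ^ (-q) * (c + z^2) ^ (-p) := by
  apply Continuous.mul
  · exact Continuous.rpow_const (by continuity) (fun z => Or.inl (by positivity))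
  · exact Continuous.rpow_const (by continuity) (fun z => Or.inl (by positivity))

lemma integrable_J {q p c : ℝ} (hq : 0 < q) (hp : (1:ℝ)/2 ≤ p) (hc : 0 < c) :
    IntegrableOn (fun z : ℝ => (1 + z^2) ^ (-q) * (c + z^2) ^ (-p)) (Set.Ioi 0) := by
  rw [← Ioc_union_Ioi_eq_Ioi (zero_le_one' ℝ), integrableOn_union]
  constructor
  · exact ((cont_integrand hc).integrableOn_Icc (a := 0) (b := 1)).mono_set Ioc_subset_Icc_self
  · have hint : IntegrableOn (fun z : ℝ => z ^ (-(2*q+2*p))) (Set.Ioi 1) :=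
      integrableOn_Ioi_rpow_of_lt (by linarith) one_pos
    refine Integrable.mono hint ((cont_integrand hc).aestronglyMeasurable.restrict) ?_
    filter_upwards [ae_restrict_mem measurableSet_Ioi] with z hz
    have hz1 : (1:ℝ) ≤ z := le_of_lt hz
    have hz0 : (0:ℝ) < z := lt_of_lt_of_le one_pos hz1
    have h1 : (1 + z^2 : ℝ) ^ (-q) ≤ (z^2) ^ (-q) :=
      rpow_le_rpow_of_nonpos (by positivity) (by nlinarith) (by linarith)
    have h2 : (c + z^2 : ℝ) ^ (-p) ≤ (z^2) ^ (-p) :=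
      rpow_le_rpow_of_nonpos (by positivity) (by nlinarith) (by linarith)
    have he : (z^2:ℝ) ^ (-q) * (z^2) ^ (-p) = z ^ (-(2*q+2*p)) := by
      rw [← rpow_natCast z 2, ← rpow_mul hz0.le, ← rpow_mul hz0.le, ← rpow_add hz0]
      norm_num; ring_nf
    rw [norm_of_nonneg (by positivity), norm_of_nonneg (by positivity)]
    calc (1 + z^2) ^ (-q) * (c + z^2) ^ (-p) ≤ (z^2:ℝ) ^ (-q) * (z^2) ^ (-p) :=
          mul_le_mul h1 h2 (by positivity) (by positivity)
      _ = z ^ (-(2*q+2*p)) := he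

lemma J_pos {q p c : ℝ} (hq : 0 < q) (hp : (1:ℝ)/2 ≤ p) (hc : 0 < c) : 0 < Jf q p c := by
  rw [Jf]
  refine (setIntegral_pos_iff_support_of_nonneg_ae ?_ (integrable_J hq hp hc)).mpr ?_
  · filter_upwards with z using by positivity
  · have hsub : Set.Ioi (0:ℝ) ⊆
        Function.support (fun z : ℝ => (1 + z^2) ^ (-q) * (c + z^2) ^ (-p)) ∩ Set.Ioi 0 := by
      intro z hz
      refine ⟨?_, hz⟩
      simp only [Function.mem_support]
      positivity
    refine lt_of_lt_of_le ?_ (measure_mono hsub)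
    simp [Real.volume_Ioi]

lemma J_anti {q p c c' : ℝ} (hq : 0 < q) (hp : (1:ℝ)/2 ≤ p) (hc : 0 < c) (hcc : c ≤ c') :
    Jf q p c' ≤ Jf q p c := by
  apply setIntegral_mono_on (integrable_J hq hp (lt_of_lt_of_le hc hcc)) (integrable_J hq hp hc)
    measurableSet_Ioi
  intro z _
  have : (c' + z^2 : ℝ) ^ (-p) ≤ (c + z^2) ^ (-p) :=
    rpow_le_rpow_of_nonpos (by positivity) (by linarith) (by linarith)
  exact mul_le_mul_of_nonneg_left this (by positivity)


lemma hasDerivAt_J {q p c : ℝ} (hq : 0 < q) (hp : (1:ℝ)/2 ≤ p) (hc : 0 < c) :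
    HasDerivAt (Jf q p) (-p * Jf q (p+1) c) c := by
  have hp0 : 0 < p := lt_of_lt_of_le (by norm_num) hp
  have hc2 : 0 < c/2 := by linarith
  have key := hasDerivAt_integral_of_dominated_loc_of_deriv_le
    (μ := volume.restrict (Set.Ioi (0:ℝ))) (x₀ := c) (s := Metric.ball c (c/2))
    (F := fun x z => (1 + z^2) ^ (-q) * ((x + z^2) ^ (-p)))
    (F' := fun x z => (1 + z^2) ^ (-q) * (-p * (x + z^2) ^ (-(p+1))))
    (bound := fun z => p * ((1 + z^2) ^ (-q) * ((c/2 + z^2) ^ (-(p+1)))))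
    (Metric.ball_mem_nhds c hc2) ?_ ?_ ?_ ?_ ?_ ?_
  · have h2 := key.2
    have heq : (∫ z in Set.Ioi (0:ℝ), (1 + z^2) ^ (-q) * (-p * (c + z^2) ^ (-(p+1))))
        = -p * Jf q (p+1) c := by
      rw [Jf, ← integral_const_mul]
      exact integral_congr_ae (Filter.Eventually.of_forall fun z => by ring)
    rw [heq] at h2
    exact h2
  · -- eventually AEStronglyMeasurable
    filter_upwards [eventually_gt_nhds (half_lt_self hc)] with x hx
    exact (cont_integrand (by linarith : (0:ℝ) < x)).aestronglyMeasurable.restrict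
  · exact integrable_J hq hp hc
  · refine AEStronglyMeasurable.congr
      (((cont_integrand (p := p+1) hc).aestronglyMeasurable.restrict).const_mul (-p))
      (Filter.Eventually.of_forall fun z => by ring)
  · -- bound
    filter_upwards [ae_restrict_mem measurableSet_Ioi] with z hz x hx
    have hxc : c/2 < x := by
      have h := mem_ball_iff_norm.mp hx
      rw [Real.norm_eq_abs] at h
      have := abs_lt.mp h
      linarith [this.1]
    have hz0 : (0:ℝ) < z := hz
    have hpos : (0:ℝ) < x + z^2 := by nlinarith [sq_nonneg z]
    have hle : (x + z^2) ^ (-(p+1)) ≤ (c/2 + z^2) ^ (-(p+1)) :=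
      rpow_le_rpow_of_nonpos (by positivity) (by linarith) (by linarith)
    have hnorm : ‖(1 + z^2) ^ (-q) * (-p * (x + z^2) ^ (-(p+1)))‖
        = p * ((1 + z^2) ^ (-q) * ((x + z^2) ^ (-(p+1)))) := by
      rw [Real.norm_eq_abs, abs_mul, abs_of_nonneg (by positivity), abs_mul, abs_neg,
        abs_of_nonneg hp0.le, abs_of_nonneg (by positivity)]
      ring
    rw [hnorm]
    gcongr
  · -- bound integrable
    exact (integrable_J hq (by linarith : (1:ℝ)/2 ≤ p+1) hc2).const_mul p
  · -- differentiability
    filter_upwards [ae_restrict_mem measurableSet_Ioi] with z hz x hx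
    have hxc : c/2 < x := by
      have h := mem_ball_iff_norm.mp hx
      rw [Real.norm_eq_abs] at h
      have := abs_lt.mp h
      linarith [this.1]
    have hpos : (0:ℝ) < x + z^2 := by nlinarith [sq_nonneg z]
    have hinner : HasDerivAt (fun x : ℝ => x + z^2) 1 x := (hasDerivAt_id x).add_const _
    have houter := Real.hasDerivAt_rpow_const (p := -p) (Or.inl hpos.ne')
    have hcomp := HasDerivAt.comp x houter hinner
    have := hcomp.const_mul ((1 + z^2) ^ (-q))
    refine this.congr_deriv ?_
    rw [show -p - 1 = -(p+1) by ring]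
    ring


-- Upper bound near c → 0 : J q (1/2) c ≤ 2 c^{-1/4} + 1/(2q)
lemma J_upper {q c : ℝ} (hq : 0 < q) (hc : 0 < c) (hc1 : c ≤ 1) :
    Jf q (1/2) c ≤ 2 * c ^ (-(1/4 : ℝ)) + 1/(2*q) := by
  have hsplit : Jf q (1/2) c =
      (∫ z in Set.Ioc (0:ℝ) 1, (1 + z^2) ^ (-q) * (c + z^2) ^ (-(1/2:ℝ)))
      + ∫ z in Set.Ioi (1:ℝ), (1 + z^2) ^ (-q) * (c + z^2) ^ (-(1/2:ℝ)) := by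
    rw [Jf, ← Ioc_union_Ioi_eq_Ioi (zero_le_one' ℝ),
      setIntegral_union (Set.Ioc_disjoint_Ioi le_rfl) measurableSet_Ioi
        (((integrable_J hq le_rfl hc).mono_set (by rw [← Ioc_union_Ioi_eq_Ioi (zero_le_one' ℝ)]; exact subset_union_left)))
        (((integrable_J hq le_rfl hc).mono_set (by rw [← Ioc_union_Ioi_eq_Ioi (zero_le_one' ℝ)]; exact subset_union_right)))]
  rw [hsplit]
  have part1 : (∫ z in Set.Ioc (0:ℝ) 1, (1 + z^2) ^ (-q) * (c + z^2) ^ (-(1/2:ℝ)))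
      ≤ 2 * c ^ (-(1/4 : ℝ)) := by
    have hbd : ∀ z ∈ Set.Ioc (0:ℝ) 1,
        (1 + z^2) ^ (-q) * (c + z^2) ^ (-(1/2:ℝ)) ≤ c ^ (-(1/4:ℝ)) * z ^ (-(1/2:ℝ)) := by
      intro z hz
      obtain ⟨hz0, hz1⟩ := hz
      have h1 : (1 + z^2 : ℝ) ^ (-q) ≤ 1 :=
        rpow_le_one_of_one_le_of_nonpos (by nlinarith) (by linarith)
      set u := c ^ ((1/2):ℝ) with hu
      have hu0 : 0 < u := rpow_pos_of_pos hc _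
      have hu2 : u^2 = c := by
        rw [hu, ← rpow_natCast (c ^ ((1/2):ℝ)) 2, ← rpow_mul hc.le]; norm_num
      have hge : u * z ≤ c + z^2 := by nlinarith [sq_nonneg (u - z)]
      have h2 : (c + z^2 : ℝ) ^ (-(1/2:ℝ)) ≤ (u*z) ^ (-(1/2:ℝ)) :=
        rpow_le_rpow_of_nonpos (by positivity) hge (by norm_num)
      have h3 : (u*z : ℝ) ^ (-(1/2:ℝ)) = c ^ (-(1/4:ℝ)) * z ^ (-(1/2:ℝ)) := by
        rw [mul_rpow hu0.le hz0.le, hu, ← rpow_mul hc.le]; norm_num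
      calc (1 + z^2) ^ (-q) * (c + z^2) ^ (-(1/2:ℝ))
          ≤ 1 * ((u*z) ^ (-(1/2:ℝ))) := mul_le_mul h1 h2 (by positivity) (by norm_num)
        _ = c ^ (-(1/4:ℝ)) * z ^ (-(1/2:ℝ)) := by rw [one_mul, h3]
    have hint2 : IntegrableOn (fun z : ℝ => c ^ (-(1/4:ℝ)) * z ^ (-(1/2:ℝ))) (Set.Ioc 0 1) :=
      Integrable.const_mul ((intervalIntegrable_iff_integrableOn_Ioc_of_le
        (zero_le_one' ℝ)).mp (intervalIntegral.intervalIntegrable_rpow' (by norm_num))) _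
    have hint1 : IntegrableOn (fun z : ℝ => (1 + z^2) ^ (-q) * (c + z^2) ^ (-(1/2:ℝ))) (Set.Ioc 0 1) :=
      (integrable_J hq le_rfl hc).mono_set (Set.Ioc_subset_Ioi_self)
    calc (∫ z in Set.Ioc (0:ℝ) 1, (1 + z^2) ^ (-q) * (c + z^2) ^ (-(1/2:ℝ)))
        ≤ ∫ z in Set.Ioc (0:ℝ) 1, c ^ (-(1/4:ℝ)) * z ^ (-(1/2:ℝ)) :=
          setIntegral_mono_on hint1 hint2 measurableSet_Ioc hbd
      _ = c ^ (-(1/4:ℝ)) * ∫ z in Set.Ioc (0:ℝ) 1, z ^ (-(1/2:ℝ)) := integral_const_mul _ _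
      _ = 2 * c ^ (-(1/4 : ℝ)) := by
          rw [← intervalIntegral.integral_of_le (zero_le_one' ℝ),
            integral_rpow (Or.inl (by norm_num))]
          norm_num
          ring
  have part2 : (∫ z in Set.Ioi (1:ℝ), (1 + z^2) ^ (-q) * (c + z^2) ^ (-(1/2:ℝ)))
      ≤ 1/(2*q) := by
    have hbd : ∀ z ∈ Set.Ioi (1:ℝ),
        (1 + z^2) ^ (-q) * (c + z^2) ^ (-(1/2:ℝ)) ≤ z ^ (-(2*q+1)) := by
      intro z hz
      have hz1 : (1:ℝ) < z := hz
      have hz0 : (0:ℝ) < z := by linarith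
      have h1 : (1 + z^2 : ℝ) ^ (-q) ≤ (z^2) ^ (-q) :=
        rpow_le_rpow_of_nonpos (by positivity) (by nlinarith) (by linarith)
      have h2 : (c + z^2 : ℝ) ^ (-(1/2:ℝ)) ≤ (z^2) ^ (-(1/2:ℝ)) :=
        rpow_le_rpow_of_nonpos (by positivity) (by nlinarith) (by norm_num)
      have he : (z^2:ℝ) ^ (-q) * (z^2) ^ (-(1/2:ℝ)) = z ^ (-(2*q+1)) := by
        rw [← rpow_natCast z 2, ← rpow_mul hz0.le, ← rpow_mul hz0.le, ← rpow_add hz0]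
        norm_num; ring_nf
      calc (1 + z^2) ^ (-q) * (c + z^2) ^ (-(1/2:ℝ))
          ≤ (z^2:ℝ) ^ (-q) * (z^2) ^ (-(1/2:ℝ)) :=
            mul_le_mul h1 h2 (by positivity) (by positivity)
        _ = z ^ (-(2*q+1)) := he
    have hint2 : IntegrableOn (fun z : ℝ => z ^ (-(2*q+1))) (Set.Ioi 1) :=
      integrableOn_Ioi_rpow_of_lt (by linarith) one_pos
    have hint1 : IntegrableOn (fun z : ℝ => (1 + z^2) ^ (-q) * (c + z^2) ^ (-(1/2:ℝ))) (Set.Ioi 1) :=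
      (integrable_J hq le_rfl hc).mono_set (fun z hz => Set.mem_Ioi.mpr (lt_trans one_pos (Set.mem_Ioi.mp hz)))
    calc (∫ z in Set.Ioi (1:ℝ), (1 + z^2) ^ (-q) * (c + z^2) ^ (-(1/2:ℝ)))
        ≤ ∫ z in Set.Ioi (1:ℝ), z ^ (-(2*q+1)) :=
          setIntegral_mono_on hint1 hint2 measurableSet_Ioi hbd
      _ = 1/(2*q) := by
          rw [integral_Ioi_rpow_of_lt (by linarith) one_pos]
          rw [Real.one_rpow]
          field_simp
          ring
  linarith

-- Lower bound: (1/6)/c ≤ J q (3/2) c for 0 < c ≤ 1, q ≤ 1/2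
lemma J_lower {q c : ℝ} (hq : 0 < q) (hq2 : q ≤ 1/2) (hc : 0 < c) (hc1 : c ≤ 1) :
    (1/6)/c ≤ Jf q (3/2) c := by
  set u := c ^ ((1/2):ℝ) with hu
  have hu0 : 0 < u := rpow_pos_of_pos hc _
  have hu2 : u^2 = c := by
    rw [hu, ← rpow_natCast (c ^ ((1/2):ℝ)) 2, ← rpow_mul hc.le]; norm_num
  have hu1 : u ≤ 1 := by
    rw [hu]; exact Real.rpow_le_one hc.le hc1 (by norm_num)
  -- constant lower bound on Ioc 0 u
  have hbd : ∀ z ∈ Set.Ioc (0:ℝ) u,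
      (1/2) * (2*c) ^ (-(3/2:ℝ)) ≤ (1 + z^2) ^ (-q) * (c + z^2) ^ (-(3/2:ℝ)) := by
    intro z hz
    obtain ⟨hz0, hzu⟩ := hz
    have hzsq : z^2 ≤ c := by nlinarith
    have h1 : (1/2 : ℝ) ≤ (1 + z^2) ^ (-q) := by
      have base_le : (1 + z^2 : ℝ) ≤ 2 := by nlinarith
      have h2q : (2:ℝ) ^ (-q) ≤ (1 + z^2) ^ (-q) :=
        rpow_le_rpow_of_nonpos (by nlinarith [sq_nonneg z]) base_le (by linarith)
      have : ((2:ℝ)) ^ (-(1/2:ℝ)) ≤ (2:ℝ) ^ (-q) :=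
        Real.rpow_le_rpow_of_exponent_le (by norm_num) (by linarith)
      have hhalf : (1/2 : ℝ) ≤ (2:ℝ) ^ (-(1/2:ℝ)) := by
        have hp2 : (0:ℝ) < (2:ℝ) ^ ((1/2):ℝ) := rpow_pos_of_pos (by norm_num) _
        have h2 : ((2:ℝ) ^ ((1/2):ℝ))^2 = 2 := by
          rw [← rpow_natCast ((2:ℝ) ^ ((1/2):ℝ)) 2, ← rpow_mul (by norm_num : (0:ℝ) ≤ 2)]
          norm_num
        rw [Real.rpow_neg (by norm_num), inv_eq_one_div, le_div_iff₀ hp2]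
        nlinarith
      linarith
    have h2 : (2*c : ℝ) ^ (-(3/2:ℝ)) ≤ (c + z^2) ^ (-(3/2:ℝ)) :=
      rpow_le_rpow_of_nonpos (by positivity) (by nlinarith) (by norm_num)
    exact mul_le_mul h1 h2 (by positivity) (by positivity)
  have hintc : IntegrableOn (fun _ : ℝ => (1/2) * (2*c) ^ (-(3/2:ℝ))) (Set.Ioc 0 u) := by
    exact integrableOn_const (by rw [Real.volume_Ioc]; exact ENNReal.ofReal_ne_top)
  have hint1 : IntegrableOn (fun z : ℝ => (1 + z^2) ^ (-q) * (c + z^2) ^ (-(3/2:ℝ)))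
      (Set.Ioc 0 u) := (integrable_J hq (by norm_num) hc).mono_set Set.Ioc_subset_Ioi_self
  have step1 : (∫ _ in Set.Ioc (0:ℝ) u, (1/2) * (2*c) ^ (-(3/2:ℝ)))
      ≤ ∫ z in Set.Ioc (0:ℝ) u, (1 + z^2) ^ (-q) * (c + z^2) ^ (-(3/2:ℝ)) :=
    setIntegral_mono_on hintc hint1 measurableSet_Ioc hbd
  have step2 : (∫ z in Set.Ioc (0:ℝ) u, (1 + z^2) ^ (-q) * (c + z^2) ^ (-(3/2:ℝ)))
      ≤ Jf q (3/2) c := by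
    rw [Jf]
    refine setIntegral_mono_set (integrable_J hq (by norm_num) hc) ?_ ?_
    · filter_upwards with z using by positivity
    · exact HasSubset.Subset.eventuallyLE Set.Ioc_subset_Ioi_self
  have hval : (∫ _ in Set.Ioc (0:ℝ) u, (1/2) * (2*c) ^ (-(3/2:ℝ)))
      = u * ((1/2) * (2*c) ^ (-(3/2:ℝ))) := by
    rw [setIntegral_const, measureReal_def, Real.volume_Ioc, smul_eq_mul]
    rw [ENNReal.toReal_ofReal (by linarith)]
    ring_nf
  have harith : (1/6)/c ≤ u * ((1/2) * (2*c) ^ (-(3/2:ℝ))) := by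
    have hmul : (2*c : ℝ) ^ (-(3/2:ℝ)) = (2:ℝ) ^ (-(3/2:ℝ)) * c ^ (-(3/2:ℝ)) :=
      Real.mul_rpow (by norm_num) hc.le
    have hc13 : u * c ^ (-(3/2:ℝ)) = 1/c := by
      rw [hu, ← Real.rpow_add hc]
      norm_num
      rw [show (-1:ℝ) = ((-1:ℤ):ℝ) by norm_num, Real.rpow_intCast]
      simp [zpow_neg_one]
    have h23 : (1/3:ℝ) ≤ (2:ℝ) ^ (-(3/2:ℝ)) := by
      have hp2 : (0:ℝ) < (2:ℝ) ^ ((3/2):ℝ) := rpow_pos_of_pos (by norm_num) _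
      have h2 : ((2:ℝ) ^ ((3/2):ℝ))^2 = 8 := by
        rw [← rpow_natCast ((2:ℝ) ^ ((3/2):ℝ)) 2, ← rpow_mul (by norm_num : (0:ℝ) ≤ 2)]
        norm_num
      rw [Real.rpow_neg (by norm_num), inv_eq_one_div, le_div_iff₀ hp2]
      nlinarith
    calc (1/6)/c = (1/2) * (1/3) * (1/c) := by ring
      _ ≤ (1/2) * ((2:ℝ) ^ (-(3/2:ℝ))) * (1/c) := by
          have h1c : (0:ℝ) ≤ 1/c := by positivity
          nlinarith
      _ = u * ((1/2) * (2*c) ^ (-(3/2:ℝ))) := by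
          rw [hmul, ← hc13]; ring
  linarith


set_option maxHeartbeats 1000000 in
theorem stmt16 (α : ℕ) (hα : 2 < α) (M : ℝ → ℝ)
    (hM : ∀ ω : ℝ, M ω =
      (2 / (α : ℝ)) * ω ^ (1 / (α : ℝ) - 1 / 2) * (1 / ((α : ℝ) + 1)) ^ (-(1 / (α : ℝ))) *
        ∫ z in Set.Ioi (0 : ℝ),
          (1 + z ^ 2) ^ (-(1 / (α : ℝ))) *
            ((1 - ω / (1 / ((α : ℝ) + 1))) + z ^ 2) ^ (-(1 / 2 : ℝ))) :
    ∃ ωc ∈ Set.Ioo (0 : ℝ) (1 / ((α : ℝ) + 1)),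
      deriv M ωc = 0 ∧
      (∀ ω ∈ Set.Ioo (0 : ℝ) ωc, deriv M ω < 0) ∧
      (∀ ω ∈ Set.Ioo ωc (1 / ((α : ℝ) + 1)), 0 < deriv M ω) ∧
      ∀ ω ∈ Set.Ioo (0 : ℝ) (1 / ((α : ℝ) + 1)), deriv M ω = 0 → ω = ωc := by
  have hα3 : (3:ℝ) ≤ (α:ℝ) := by exact_mod_cast hα
  have hα0 : (0:ℝ) < (α:ℝ) := by linarith
  obtain ⟨q, hqdef⟩ : ∃ x : ℝ, x = 1 / (α:ℝ) := ⟨_, rfl⟩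
  have hq : 0 < q := by rw [hqdef]; positivity
  have hq2 : q ≤ 1/3 := by rw [hqdef]; rw [div_le_iff₀ hα0]; linarith
  obtain ⟨b, hbdef⟩ : ∃ x : ℝ, x = (α:ℝ) + 1 := ⟨_, rfl⟩
  have hb : (0:ℝ) < b := by rw [hbdef]; linarith
  have hb4 : (4:ℝ) ≤ b := by rw [hbdef]; linarith
  obtain ⟨ωs, hωsdef⟩ : ∃ x : ℝ, x = 1 / b := ⟨_, rfl⟩
  have hgoal : (1:ℝ)/((α:ℝ)+1) = ωs := by rw [hωsdef, hbdef]
  rw [hgoal]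
  have hωs : 0 < ωs := by rw [hωsdef]; exact one_div_pos.mpr hb
  have hbωs : b * ωs = 1 := by rw [hωsdef]; field_simp
  obtain ⟨a, hadef⟩ : ∃ x : ℝ, x = q - 1/2 := ⟨_, rfl⟩
  have ha : a < 0 := by rw [hadef]; linarith
  have ha2 : -(1/2) ≤ a := by rw [hadef]; linarith
  have ha1 : 0 < a + 1 := by rw [hadef]; linarith
  -- the functions (opaque, with defining equations)
  obtain ⟨G, Gapp⟩ : ∃ G : ℝ → ℝ, ∀ ω, G ω = Jf q (1/2) (1 - b*ω) := ⟨_, fun _ => rfl⟩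
  obtain ⟨Gd, Gdapp⟩ : ∃ F : ℝ → ℝ, ∀ ω, F ω = (b/2) * Jf q (3/2) (1 - b*ω) := ⟨_, fun _ => rfl⟩
  obtain ⟨Gdd, Gddapp⟩ : ∃ F : ℝ → ℝ, ∀ ω, F ω = (3*b^2/4) * Jf q (5/2) (1 - b*ω) :=
    ⟨_, fun _ => rfl⟩
  obtain ⟨h, happ⟩ : ∃ F : ℝ → ℝ, ∀ ω, F ω = a * G ω + ω * Gd ω := ⟨_, fun _ => rfl⟩
  have hsc : ∀ ω : ℝ, ω < ωs → 0 < 1 - b*ω := by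
    intro ω hω
    have : b * ω < b * ωs := by exact (mul_lt_mul_iff_right₀ hb).mpr hω
    rw [hbωs] at this; linarith
  -- derivatives
  have hinner : ∀ ω : ℝ, HasDerivAt (fun ω : ℝ => 1 - b*ω) (-b) ω := by
    intro ω
    have := ((hasDerivAt_id ω).const_mul b).const_sub 1
    simpa using this
  have hGderiv : ∀ ω : ℝ, ω < ωs → HasDerivAt G (Gd ω) ω := by
    intro ω hω
    have houter := hasDerivAt_J (p := 1/2) hq le_rfl (hsc ω hω)
    have hcomp := HasDerivAt.comp ω houter (hinner ω)
    have hfun : G = fun ω => Jf q (1/2) (1 - b*ω) := funext Gapp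
    rw [hfun, Gdapp]
    refine hcomp.congr_deriv ?_
    rw [show (1/2:ℝ)+1 = 3/2 by norm_num]
    ring
  have hGdderiv : ∀ ω : ℝ, ω < ωs → HasDerivAt Gd (Gdd ω) ω := by
    intro ω hω
    have houter := hasDerivAt_J (p := 3/2) hq (by norm_num) (hsc ω hω)
    have hcomp := (HasDerivAt.comp ω houter (hinner ω)).const_mul (b/2)
    have hfun : Gd = fun ω => (b/2) * Jf q (3/2) (1 - b*ω) := funext Gdapp
    rw [hfun, Gddapp]
    refine hcomp.congr_deriv ?_
    rw [show (3/2:ℝ)+1 = 5/2 by norm_num]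
    ring
  have hGpos : ∀ ω : ℝ, ω < ωs → 0 < G ω := by
    intro ω hω
    rw [Gapp]
    exact J_pos hq le_rfl (hsc ω hω)
  have hGdpos : ∀ ω : ℝ, ω < ωs → 0 < Gd ω := by
    intro ω hω
    have := J_pos (p := 3/2) hq (by norm_num) (hsc ω hω)
    rw [Gdapp]
    exact mul_pos (by linarith) this
  have hGddpos : ∀ ω : ℝ, ω < ωs → 0 < Gdd ω := by
    intro ω hω
    have := J_pos (p := 5/2) hq (by norm_num) (hsc ω hω)
    rw [Gddapp]
    exact mul_pos (by linarith [pow_pos hb 2]) this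
  have hhderiv : ∀ ω : ℝ, ω < ωs → HasDerivAt h ((a+1) * Gd ω + ω * Gdd ω) ω := by
    intro ω hω
    have h1 := (hGderiv ω hω).const_mul a
    have h2 := (hasDerivAt_id ω).mul (hGdderiv ω hω)
    have hsum := h1.add h2
    have hfun : h = fun ω => a * G ω + ω * Gd ω := funext happ
    rw [hfun]
    refine hsum.congr_deriv ?_
    simp only [id_eq]
    ring
  have hmono : StrictMonoOn h (Set.Ioo 0 ωs) := by
    apply strictMonoOn_of_deriv_pos (convex_Ioo _ _)
    · intro ω hω
      exact ((hhderiv ω hω.2).continuousAt).continuousWithinAt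
    · intro ω hω
      rw [interior_Ioo] at hω
      rw [(hhderiv ω hω.2).deriv]
      have g1 := hGdpos ω hω.2
      have g2 := hGddpos ω hω.2
      have t1 := mul_pos ha1 g1
      have t2 := mul_pos hω.1 g2
      linarith
  -- negative point
  obtain ⟨g0, hg0e⟩ : ∃ x : ℝ, x = Jf q (1/2) 1 := ⟨_, rfl⟩
  have hg0 : 0 < g0 := by rw [hg0e]; exact J_pos hq le_rfl one_pos
  obtain ⟨K, hKe⟩ : ∃ x : ℝ, x = (b/2) * Jf q (3/2) (1/2) := ⟨_, rfl⟩
  have hK : 0 < K := by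
    have := J_pos (q := q) (p := 3/2) (c := 1/2) hq (by norm_num) (by norm_num)
    rw [hKe]
    exact mul_pos (by linarith) this
  obtain ⟨ω₁, hω₁e⟩ : ∃ x : ℝ, x = min (ωs/2) ((-a)*g0/(2*K)) := ⟨_, rfl⟩
  have hω₁pos : 0 < ω₁ := by
    rw [hω₁e]
    apply lt_min (by linarith)
    exact div_pos (mul_pos (by linarith) hg0) (by linarith)
  have hω₁le : ω₁ ≤ ωs/2 := by rw [hω₁e]; exact min_le_left _ _
  have hω₁lt : ω₁ < ωs := by linarith
  have hhω₁ : h ω₁ < 0 := by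
    have hc1 : 1 - b*ω₁ ≤ 1 := by
      have := mul_pos hb hω₁pos
      linarith
    have hG1 : g0 ≤ G ω₁ := by
      rw [Gapp, hg0e]
      exact J_anti hq le_rfl (hsc ω₁ hω₁lt) hc1
    have hchalf : (1/2:ℝ) ≤ 1 - b*ω₁ := by
      have h1 : b * ω₁ ≤ b * (ωs/2) := mul_le_mul_of_nonneg_left hω₁le hb.le
      have h2 : b * (ωs/2) = 1/2 := by rw [← hbωs]; ring
      linarith [h2 ▸ h1]
    have hGd1 : Gd ω₁ ≤ K := by
      rw [Gdapp, hKe]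
      have := J_anti (q := q) (p := 3/2) hq (by norm_num) (by norm_num) hchalf
      exact mul_le_mul_of_nonneg_left this (by linarith)
    have hstep : h ω₁ ≤ a * g0 + ω₁ * K := by
      rw [happ]
      have t1 : a * G ω₁ ≤ a * g0 := mul_le_mul_of_nonpos_left hG1 ha.le
      have t2 : ω₁ * Gd ω₁ ≤ ω₁ * K := mul_le_mul_of_nonneg_left hGd1 hω₁pos.le
      linarith
    have hK2 : ω₁ * K ≤ (-a)*g0/2 := by
      have h1 : ω₁ ≤ (-a)*g0/(2*K) := by rw [hω₁e]; exact min_le_right _ _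
      calc ω₁ * K ≤ ((-a)*g0/(2*K)) * K := mul_le_mul_of_nonneg_right h1 hK.le
        _ = (-a)*g0/2 := by
            rw [div_mul_eq_mul_div]
            rw [mul_comm 2 K, ← div_div, mul_div_assoc, div_self hK.ne', mul_one]
    have hag0 : a * g0 < 0 := mul_neg_of_neg_of_pos ha hg0
    linarith only [hstep, hK2, hag0]
  -- positive point
  obtain ⟨T, hTe⟩ : ∃ x : ℝ, x = 6*(α:ℝ) + 48 := ⟨_, rfl⟩
  have hT : (66:ℝ) ≤ T := by rw [hTe]; linarith
  have hT0 : (0:ℝ) < T := by linarith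
  obtain ⟨s, hse⟩ : ∃ x : ℝ, x = T ^ (-(4:ℝ)) := ⟨_, rfl⟩
  have hs0 : 0 < s := by rw [hse]; exact rpow_pos_of_pos hT0 _
  have hsT4 : s * T^4 = 1 := by
    rw [hse, ← rpow_natCast T 4, ← Real.rpow_add hT0]
    norm_num
  have hT4big : (2:ℝ) ≤ T^4 := by
    have := pow_le_pow_left₀ (by norm_num : (0:ℝ) ≤ 66) hT 4
    linarith only [this]
  have hT4big2 : (3:ℝ) ≤ T^4 := by
    have := pow_le_pow_left₀ (by norm_num : (0:ℝ) ≤ 66) hT 4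
    linarith only [this]
  have hs12 : s < 1/2 := by nlinarith only [hsT4, hs0, hT4big2]
  have hsinv : s ^ (-(1/4:ℝ)) = T := by
    rw [hse, ← Real.rpow_mul hT0.le]
    norm_num
  obtain ⟨ω₂, hω₂e⟩ : ∃ x : ℝ, x = ωs * (1 - s) := ⟨_, rfl⟩
  have hω₂s : ω₂ < ωs := by
    rw [hω₂e]
    have := mul_pos hωs hs0
    nlinarith only [this]
  have hω₂half : ωs/2 < ω₂ := by
    rw [hω₂e]
    have := mul_pos hωs (by linarith : (0:ℝ) < 1/2 - s)
    nlinarith only [this]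
  have hω₂pos : 0 < ω₂ := by linarith
  have hcω₂ : 1 - b*ω₂ = s := by
    rw [hω₂e]
    have e : b * (ωs * (1-s)) = 1 - s := by linear_combination (1-s) * hbωs
    rw [e]; ring
  have hhω₂ : 0 < h ω₂ := by
    have hGub : G ω₂ ≤ 2 * s ^ (-(1/4:ℝ)) + 1/(2*q) := by
      rw [Gapp, hcω₂]
      exact J_upper hq hs0 (by linarith)
    have h2q : 1/(2*q) = (α:ℝ)/2 := by rw [hqdef]; field_simp
    have hGdlb : (1/24)/s ≤ ω₂ * Gd ω₂ := by
      have hJ : (1/6)/s ≤ Jf q (3/2) s := J_lower hq (by linarith) hs0 (by linarith)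
      have hGde : Gd ω₂ = (b/2) * Jf q (3/2) s := by rw [Gdapp, hcω₂]
      rw [hGde]
      have hb2 : (1/4:ℝ) ≤ ω₂ * (b/2) := by
        have e1 : ωs/2 * (b/2) ≤ ω₂ * (b/2) :=
          mul_le_mul_of_nonneg_right hω₂half.le (by linarith)
        have e2 : ωs/2 * (b/2) = (b*ωs)/4 := by ring
        rw [hbωs] at e2
        linarith
      have hJpos : 0 < Jf q (3/2) s := J_pos hq (by norm_num) hs0
      calc (1/24)/s = (1/4) * ((1/6)/s) := by ring
        _ ≤ (ω₂ * (b/2)) * Jf q (3/2) s :=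
            mul_le_mul hb2 hJ (le_of_lt (div_pos (by norm_num) hs0)) (by linarith)
        _ = ω₂ * ((b/2) * Jf q (3/2) s) := by ring
    have haG : a * G ω₂ ≥ -(s ^ (-(1/4:ℝ)) + (α:ℝ)/4) := by
      have hGpos2 := hGpos ω₂ hω₂s
      have hGub2 : G ω₂ ≤ 2 * s ^ (-(1/4:ℝ)) + (α:ℝ)/2 := by rw [← h2q]; exact hGub
      have hspos : 0 < s ^ (-(1/4:ℝ)) := rpow_pos_of_pos hs0 _
      have e1 : a * (2 * s ^ (-(1/4:ℝ)) + (α:ℝ)/2) ≤ a * G ω₂ :=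
        mul_le_mul_of_nonpos_left hGub2 ha.le
      have e2 : -(1/2) * (2 * s ^ (-(1/4:ℝ)) + (α:ℝ)/2)
          ≤ a * (2 * s ^ (-(1/4:ℝ)) + (α:ℝ)/2) :=
        mul_le_mul_of_nonneg_right ha2 (by linarith [hspos, hα0])
      linarith only [e1, e2]
    have hfinal : 0 < (1/24)/s - s ^ (-(1/4:ℝ)) - (α:ℝ)/4 := by
      rw [hsinv]
      have hsinv2 : 1/s = T^4 := by
        rw [eq_comm, eq_div_iff hs0.ne']
        linear_combination hsT4
      have hsval : (1/24)/s = T^4/24 := by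
        calc (1/24)/s = (1/24) * (1/s) := by ring
          _ = (1/24) * T^4 := by rw [hsinv2]
          _ = T^4/24 := by ring
      rw [hsval]
      have hT3 : (66:ℝ)^3 ≤ T^3 := pow_le_pow_left₀ (by norm_num : (0:ℝ) ≤ 66) hT 3
      have hαT : (α:ℝ) ≤ T := by rw [hTe]; linarith
      have hmul : T * 66^3 ≤ T * T^3 := mul_le_mul_of_nonneg_left hT3 hT0.le
      have hT4e : T * T^3 = T^4 := by ring
      linarith only [hmul, hT4e, hαT, hT, hT0]
    have he : h ω₂ = a * G ω₂ + ω₂ * Gd ω₂ := happ ω₂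
    linarith only [he, haG, hGdlb, hfinal]
  -- rewrite M
  obtain ⟨C, hCe⟩ : ∃ x : ℝ, x = 2/(α:ℝ) * ωs ^ (-q) := ⟨_, rfl⟩
  have hCpos : 0 < C := by
    have : (0:ℝ) < ωs ^ (-q) := rpow_pos_of_pos hωs _
    rw [hCe]; positivity
  have hMfun : M = fun ω => C * (ω ^ a * G ω) := by
    funext ω
    rw [hM ω]
    rw [show (1:ℝ)/((α:ℝ)+1) = ωs from hgoal]
    rw [show 1/(α:ℝ) = q from hqdef.symm]
    rw [show q - 1/2 = a from hadef.symm]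
    have e : ∀ z : ℝ, (1 - ω/ωs + z^2) = ((1 - b*ω) + z^2) := by
      intro z
      rw [hωsdef]
      rw [div_div_eq_mul_div, div_one]
      ring
    simp only [e]
    rw [Gapp, hCe, Jf]
    ring
  have hMderiv : ∀ ω, ω ∈ Set.Ioo 0 ωs → HasDerivAt M (C * ω^(a-1) * h ω) ω := by
    intro ω hω
    have hω0 : (0:ℝ) < ω := hω.1
    have hpow : HasDerivAt (fun ω : ℝ => ω ^ a) (a * ω^(a-1)) ω :=
      Real.hasDerivAt_rpow_const (Or.inl hω0.ne')
    have hprod := (hpow.mul (hGderiv ω hω.2)).const_mul C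
    rw [hMfun]
    refine hprod.congr_deriv ?_
    have hsplit : ω ^ a = ω^(a-1) * ω := by
      rw [← Real.rpow_add_one hω0.ne' (a-1)]
      congr 1
      ring
    rw [happ, hsplit]
    ring
  have hDM : ∀ ω ∈ Set.Ioo 0 ωs, deriv M ω = C * ω^(a-1) * h ω :=
    fun ω hω => (hMderiv ω hω).deriv
  -- IVT
  have hω₁ω₂ : ω₁ < ω₂ := lt_of_le_of_lt hω₁le hω₂half
  have hcontIcc : ContinuousOn h (Set.Icc ω₁ ω₂) := by
    intro x hx
    have hxlt : x < ωs := lt_of_le_of_lt hx.2 hω₂s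
    exact (hhderiv x hxlt).continuousAt.continuousWithinAt
  obtain ⟨ωc, hωcmem, hωc0⟩ := intermediate_value_Ioo (le_of_lt hω₁ω₂) hcontIcc
    (Set.mem_Ioo.mpr ⟨hhω₁, hhω₂⟩)
  have hωcIoo : ωc ∈ Set.Ioo (0:ℝ) ωs :=
    ⟨lt_trans hω₁pos hωcmem.1, lt_trans hωcmem.2 hω₂s⟩
  refine ⟨ωc, hωcIoo, ?_, ?_, ?_, ?_⟩
  · rw [hDM ωc hωcIoo, hωc0]
    ring
  · intro ω hω
    have hωIoo : ω ∈ Set.Ioo (0:ℝ) ωs := ⟨hω.1, lt_trans hω.2 hωcIoo.2⟩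
    rw [hDM ω hωIoo]
    have hneg : h ω < 0 := by
      have := hmono hωIoo hωcIoo hω.2
      rwa [hωc0] at this
    exact mul_neg_of_pos_of_neg (mul_pos hCpos (rpow_pos_of_pos hω.1 _)) hneg
  · intro ω hω
    have hωIoo : ω ∈ Set.Ioo (0:ℝ) ωs := ⟨lt_trans hωcIoo.1 hω.1, hω.2⟩
    rw [hDM ω hωIoo]
    have hpos : 0 < h ω := by
      have := hmono hωcIoo hωIoo hω.1
      rwa [hωc0] at this
    exact mul_pos (mul_pos hCpos (rpow_pos_of_pos hωIoo.1 _)) hpos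
  · intro ω hωIoo hD0
    rw [hDM ω hωIoo] at hD0
    have hne : C * ω^(a-1) ≠ 0 :=
      ne_of_gt (mul_pos hCpos (rpow_pos_of_pos hωIoo.1 _))
    have hhω : h ω = 0 := by
      rcases mul_eq_zero.mp hD0 with h1 | h1
      · exact absurd h1 hne
      · exact h1
    exact hmono.injOn hωIoo hωcIoo (by rw [hhω, hωc0])
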